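/- Let n be a positive integer and let x_1, …, x_n be real numbers satisfying x_1 > -x_2 > x_3 > … > (-1)^{n+1} x_n > 0. Then for all indices i, k with 1 ≤ i < k ≤ n, the product x_i · (x_{i+1} + x_{i+2} + … + x_k) is strictly negative. -/

import Mathlib

open Finset

lemma alt_tail_sum_aux (n : ℕ) (x : ℕ → ℝ)
    (hpos : ∀ i, 1 ≤ i → i ≤ n → 0 < (-1 : ℝ) ^ (i + 1) * x i)
    (hdec : ∀ i, 1 ≤ i → i + 1 ≤ n →
      (-1 : ℝ) ^ (i + 2) * x (i + 1) < (-1 : ℝ) ^ (i + 1) * x i)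
    (k : ℕ) (hkn : k ≤ n) :
    ∀ m i, 1 ≤ i → i + m = k →
      0 ≤ (-1 : ℝ) ^ i * ∑ l ∈ Icc (i + 1) k, x l ∧
      (-1 : ℝ) ^ i * ∑ l ∈ Icc (i + 1) k, x l < (-1 : ℝ) ^ (i + 1) * x i := by
  intro m
  induction m with
  | zero =>
    intro i hi hik
    subst hik
    simp only [Nat.add_zero]
    rw [Finset.Icc_eq_empty (by omega)]
    simp only [Finset.sum_empty, mul_zero, le_refl, true_and]
    exact hpos i hi (by omega)
  | succ m ih =>
    intro i hi hik
    have hik1 : i + 1 ≤ k := by omega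
    obtain ⟨h0, h1⟩ := ih (i + 1) (by omega) (by omega)
    have hsum : ∑ l ∈ Icc (i + 1) k, x l = x (i + 1) + ∑ l ∈ Icc (i + 2) k, x l := by
      rw [← Finset.insert_Icc_add_one_left_eq_Icc hik1, Finset.sum_insert (by simp)]; rfl
    have hp : (-1 : ℝ) ^ (i + 2) = (-1 : ℝ) ^ i := by
      rw [pow_succ, pow_succ]; ring
    have hm : (-1 : ℝ) ^ (i + 1) = -(-1 : ℝ) ^ i := by
      rw [pow_succ]; ring
    constructor
    · rw [hsum]
      have : (-1 : ℝ) ^ i * (x (i + 1) + ∑ l ∈ Icc (i + 2) k, x l)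
          = (-1 : ℝ) ^ (i + 2) * x (i + 1) - (-1 : ℝ) ^ (i + 1) * ∑ l ∈ Icc (i + 2) k, x l := by
        rw [hp, hm]; ring
      rw [this]
      linarith
    · rw [hsum]
      have : (-1 : ℝ) ^ i * (x (i + 1) + ∑ l ∈ Icc (i + 2) k, x l)
          = (-1 : ℝ) ^ (i + 2) * x (i + 1) - (-1 : ℝ) ^ (i + 1) * ∑ l ∈ Icc (i + 2) k, x l := by
        rw [hp, hm]; ring
      rw [this]
      have hd := hdec i hi (by omega)
      linarith

/-- **Product-negativity fact from Appendix C of the paper.** If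
`x₁ > -x₂ > x₃ > ⋯ > (-1)^{n+1} xₙ > 0`, then for all `1 ≤ i < k ≤ n` the product
`x_i · (x_{i+1} + x_{i+2} + ⋯ + x_k)` is strictly negative. -/
theorem mul_tail_sum_neg_of_alternating (n : ℕ) (hn : 1 ≤ n) (x : ℕ → ℝ)
    (hpos : ∀ i, 1 ≤ i → i ≤ n → 0 < (-1 : ℝ) ^ (i + 1) * x i)
    (hdec : ∀ i, 1 ≤ i → i + 1 ≤ n →
      (-1 : ℝ) ^ (i + 2) * x (i + 1) < (-1 : ℝ) ^ (i + 1) * x i)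
    (i k : ℕ) (hi : 1 ≤ i) (hik : i < k) (hkn : k ≤ n) :
    x i * ∑ l ∈ Icc (i + 1) k, x l < 0 := by
  obtain ⟨h0, h1⟩ := alt_tail_sum_aux n x hpos hdec k hkn (k - (i + 1)) (i + 1) (by omega) (by omega)
  have hsum : ∑ l ∈ Icc (i + 1) k, x l = x (i + 1) + ∑ l ∈ Icc (i + 2) k, x l := by
    rw [← Finset.insert_Icc_add_one_left_eq_Icc (by omega), Finset.sum_insert (by simp)]; rfl
  have hp : (-1 : ℝ) ^ (i + 2) = (-1 : ℝ) ^ i := by rw [pow_succ, pow_succ]; ring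
  have hm : (-1 : ℝ) ^ (i + 1) = -(-1 : ℝ) ^ i := by rw [pow_succ]; ring
  have hSpos : 0 < (-1 : ℝ) ^ i * ∑ l ∈ Icc (i + 1) k, x l := by
    rw [hsum]
    have : (-1 : ℝ) ^ i * (x (i + 1) + ∑ l ∈ Icc (i + 2) k, x l)
        = (-1 : ℝ) ^ (i + 2) * x (i + 1) - (-1 : ℝ) ^ (i + 1) * ∑ l ∈ Icc (i + 2) k, x l := by
      rw [hp, hm]; ring
    rw [this]
    linarith
  have hxi := hpos i hi (by omega)
  have hsq : (-1 : ℝ) ^ i * (-1 : ℝ) ^ i = 1 := by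
    rw [← pow_add]; exact Even.neg_one_pow ⟨i, rfl⟩
  have key : ((-1 : ℝ) ^ (i + 1) * x i) * ((-1 : ℝ) ^ i * ∑ l ∈ Icc (i + 1) k, x l)
      = -((-1 : ℝ) ^ i * (-1 : ℝ) ^ i) * (x i * ∑ l ∈ Icc (i + 1) k, x l) := by
    rw [hm]; ring
  rw [hsq] at key
  have hprod := mul_pos hxi hSpos
  rw [key] at hprod
  linarith
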